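/- For any nonempty finite S ⊆ ℝ^m, the VRS hull vrs(S) has nonempty topological interior in ℝ^m; its recession cone is exactly the nonpositive orthant {d ∈ ℝ^m : d ≤ 0}. -/
import Mathlib


open scoped Classical
open Finset

noncomputable section

/-- The VRS (free-disposal convex) hull of a finite set of points in ℝ^m. -/
def vrs {m : ℕ} (S : Finset (Fin m → ℝ)) : Set (Fin m → ℝ) :=
  {z | ∃ l : (Fin m → ℝ) → ℝ, (∀ a, 0 ≤ l a) ∧ (∑ a ∈ S, l a) = 1 ∧
    ∀ k, z k ≤ ∑ a ∈ S, l a * a k}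

/-- The frame of `A`: the points of `A` that are extreme points of `vrs A`. -/
def frame {m : ℕ} (A : Finset (Fin m → ℝ)) : Finset (Fin m → ℝ) :=
  A.filter fun a => a ∈ Set.extremePoints ℝ (vrs A)

lemma vrs_mem_of_le {m : ℕ} {S : Finset (Fin m → ℝ)} {z w : Fin m → ℝ}
    (hz : z ∈ vrs S) (hw : ∀ k, w k ≤ z k) : w ∈ vrs S := by
  obtain ⟨l, hl0, hl1, hle⟩ := hz
  exact ⟨l, hl0, hl1, fun k => (hw k).trans (hle k)⟩

lemma mem_vrs_self {m : ℕ} {S : Finset (Fin m → ℝ)} {a : Fin m → ℝ} (ha : a ∈ S) :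
    a ∈ vrs S := by
  refine ⟨fun b => if b = a then 1 else 0, fun b => by positivity, ?_, fun k => ?_⟩
  · rw [Finset.sum_ite_eq' S a (fun _ => (1:ℝ))]
    simp [ha]
  · have : ∑ b ∈ S, (if b = a then (1:ℝ) else 0) * b k
        = ∑ b ∈ S, (if b = a then a k else 0) := by
      apply Finset.sum_congr rfl
      intro b _; split <;> simp_all
    rw [this, Finset.sum_ite_eq' S a (fun _ => a k)]
    simp [ha]

theorem stmt15 {m : ℕ} (S : Finset (Fin m → ℝ)) (hS : S.Nonempty) :
    (interior (vrs S)).Nonempty ∧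
    {d : Fin m → ℝ | ∀ x ∈ vrs S, ∀ t : ℝ, 0 ≤ t → x + t • d ∈ vrs S} =
      {d : Fin m → ℝ | ∀ k, d k ≤ 0} := by
  obtain ⟨a, ha⟩ := hS
  constructor
  · refine ⟨(fun k => a k - 1), ?_⟩
    rw [mem_interior]
    refine ⟨Metric.ball (fun k => a k - 1) 1, ?_, Metric.isOpen_ball,
      Metric.mem_ball_self one_pos⟩
    intro w hw
    apply vrs_mem_of_le (mem_vrs_self ha)
    intro k
    have h1 : dist w (fun k => a k - 1) < 1 := hw
    have h2 : dist (w k) (a k - 1) ≤ dist w (fun k => a k - 1) :=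
      dist_le_pi_dist w (fun k => a k - 1) k
    have := abs_sub_lt_iff.mp (show |w k - (a k - 1)| < 1 by
      rw [← Real.dist_eq]; exact h2.trans_lt h1)
    linarith [this.1]
  · ext d
    simp only [Set.mem_setOf_eq]
    constructor
    · intro hd k
      by_contra hk
      push_neg at hk
      set M : ℝ := S.sup' ⟨a, ha⟩ (fun b => b k) with hM
      have key : ∀ t : ℝ, 0 ≤ t → a k + t * d k ≤ M := by
        intro t ht
        obtain ⟨l, hl0, hl1, hle⟩ := hd a (mem_vrs_self ha) t ht
        have := hle k
        simp only [Pi.add_apply, Pi.smul_apply, smul_eq_mul] at this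
        refine this.trans ?_
        calc ∑ b ∈ S, l b * b k ≤ ∑ b ∈ S, l b * M := by
              apply Finset.sum_le_sum
              intro b hb
              exact mul_le_mul_of_nonneg_left (Finset.le_sup' (fun c => c k) hb) (hl0 b)
          _ = M := by rw [← Finset.sum_mul, hl1, one_mul]
      have hMa : a k ≤ M := Finset.le_sup' (fun c => c k) ha
      have ht0 : (0:ℝ) ≤ (M - a k + 1) / d k := by
        apply div_nonneg (by linarith) hk.le
      have := key _ ht0
      rw [div_mul_cancel₀ _ (ne_of_gt hk)] at this
      linarith
    · intro hd x hx t ht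
      apply vrs_mem_of_le hx
      intro k
      simp only [Pi.add_apply, Pi.smul_apply, smul_eq_mul]
      nlinarith [hd k]
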